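/- Let g ≥ 1, let p ≥ 2 be an integer, and let ε : ℤ/gℤ → {+1, −1} be any sign function. Then there exist strictly positive real numbers c_0, ..., c_{g−1} such that ε(i)·c_i + p·c_{i+1} = 1 for all i ∈ ℤ/gℤ (indices taken cyclically). Equivalently, the all-ones vector (1,...,1) ∈ ℝ^g lies in the strictly positive cone spanned by the vectors v_i = p·e_{i−1} + ε(i)·e_i. -/

import Mathlib

/-- For any sign function `ε : ℤ/gℤ → {±1}` and any `p ≥ 2`, there exist strictly
positive reals `c_i` with `ε(i)·c_i + p·c_{i+1} = 1` for all `i`; i.e. the all-ones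
vector lies in the strictly positive cone spanned by the vectors `p·e_{i-1} + ε(i)·e_i`. -/
theorem ones_in_positive_cone (g : ℕ) [NeZero g] (p : ℕ) (hp : 2 ≤ p)
    (ε : ZMod g → ℝ) (hε : ∀ i, ε i = 1 ∨ ε i = -1) :
    ∃ c : ZMod g → ℝ, (∀ i, 0 < c i) ∧ ∀ i, ε i * c i + (p : ℝ) * c (i + 1) = 1 := by
  obtain ⟨m, hg⟩ : ∃ m, g = m + 1 := ⟨g - 1, (Nat.succ_pred_eq_of_pos (NeZero.pos g)).symm⟩
  subst hg
  have hp0 : (0:ℝ) < p := by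
    have : (2:ℝ) ≤ p := by exact_mod_cast hp
    linarith
  have hp2 : (2:ℝ) ≤ p := by exact_mod_cast hp
  -- the basic data
  set s : ZMod (m+1) → ℝ := fun i => -ε i / p with hs
  set Q : ℕ → ZMod (m+1) → ℝ :=
    fun k i => ∏ j ∈ Finset.range k, s (i - ((j : ZMod (m+1)) + 1)) with hQ
  have habs : ∀ i, |s i| = 1 / p := by
    intro i
    rcases hε i with h | h <;> rw [hs] <;> simp [h, abs_div, abs_of_pos hp0]
  have hQabs : ∀ k i, |Q k i| = (1 / p) ^ k := by
    intro k i
    rw [hQ]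
    simp only
    rw [Finset.abs_prod, Finset.prod_congr rfl fun j _ => habs _]
    simp
  have hhalf : (1:ℝ) / p ≤ 1 / 2 := by
    apply div_le_div_of_nonneg_left <;> linarith
  have hQle : ∀ k i, |Q k i| ≤ (1 / 2) ^ k := by
    intro k i
    rw [hQabs]
    exact pow_le_pow_left₀ (by positivity) hhalf k
  -- shift identity
  have hshift : ∀ (i : ZMod (m+1)) (k : ℕ), Q (k + 1) (i + 1) = s i * Q k i := by
    intro i k
    rw [hQ]
    simp only
    rw [Finset.prod_range_succ']
    have h0 : (i + 1) - (((0:ℕ) : ZMod (m+1)) + 1) = i := by push_cast; ring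
    have h1 : ∀ j : ℕ, (i + 1) - (((j + 1 : ℕ) : ZMod (m+1)) + 1)
        = i - ((j : ZMod (m+1)) + 1) := by
      intro j; push_cast; ring
    rw [h0, Finset.prod_congr rfl fun j _ => by rw [h1 j]]
    ring
  -- cyclicity
  have hlast : ∀ i : ZMod (m+1), Q (m+1) i = Q m i * s i := by
    intro i
    rw [hQ]
    simp only
    rw [Finset.prod_range_succ]
    congr 2
    have : ((m : ZMod (m+1)) + 1) = (((m+1 : ℕ)) : ZMod (m+1)) := by push_cast; ring
    rw [this, ZMod.natCast_self]
    ring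
  have hcycle : ∀ i : ZMod (m+1), Q (m+1) (i + 1) = Q (m+1) i := by
    intro i
    rw [hlast i, hshift i m]
    ring
  have hconst : ∀ i : ZMod (m+1), Q (m+1) i = Q (m+1) 0 := by
    have hn : ∀ n : ℕ, Q (m+1) ((n : ZMod (m+1))) = Q (m+1) 0 := by
      intro n
      induction n with
      | zero => simp
      | succ n ih => push_cast; rw [hcycle]; exact ih
    intro i
    rw [← ZMod.natCast_rightInverse i, hn]
  set B : ℝ := Q (m+1) 0 with hB
  have hBle : |B| ≤ 1 / 2 := by
    calc |B| ≤ (1/2) ^ (m+1) := hQle (m+1) 0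
    _ ≤ (1/2) ^ 1 := by
        apply pow_le_pow_of_le_one (by norm_num) (by norm_num)
        omega
    _ = 1 / 2 := by norm_num
  have hden : (0:ℝ) < p * (1 - B) := by
    have h1 : B ≤ 1 / 2 := (abs_le.mp hBle).2
    have h2 : (0:ℝ) < 1 - B := by linarith
    positivity
  -- geometric sum bound
  have hgeom : ∀ n : ℕ, ∑ k ∈ Finset.range n, ((1:ℝ)/2) ^ (k + 1) = 1 - (1/2) ^ n := by
    intro n
    induction n with
    | zero => simp
    | succ n ih => rw [Finset.sum_range_succ, ih]; ring
  set N : ZMod (m+1) → ℝ := fun i => ∑ k ∈ Finset.range (m+1), Q k i with hN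
  have hNpos : ∀ i, 0 < N i := by
    intro i
    rw [hN]
    simp only
    rw [Finset.sum_range_succ']
    have hQ0 : Q 0 i = 1 := by rw [hQ]; simp
    have hub : ∀ k ∈ Finset.range m, -((1:ℝ)/2) ^ (k+1) ≤ Q (k+1) i := by
      intro k _
      have h := abs_le.mp (hQle (k+1) i)
      linarith [h.1]
    have hsum : -(1 - ((1:ℝ)/2) ^ m) ≤ ∑ k ∈ Finset.range m, Q (k + 1) i := by
      have heq : ∑ k ∈ Finset.range m, (-((1:ℝ)/2) ^ (k+1)) = -(1 - (1/2) ^ m) := by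
        rw [Finset.sum_neg_distrib, hgeom]
      rw [← heq]
      exact Finset.sum_le_sum hub
    have hm : (0:ℝ) < (1/2) ^ m := by positivity
    rw [hQ0]
    linarith
  refine ⟨fun i => N i / (p * (1 - B)), fun i => div_pos (hNpos i) hden, fun i => ?_⟩
  -- main computation : ε i * N i + p * N (i+1) = p * (1 - B)
  have hkey : ε i * N i + (p:ℝ) * N (i+1) = p * (1 - B) := by
    have hNi : N i = (∑ k ∈ Finset.range m, Q k i) + Q m i := by
      rw [hN]; simp only; rw [Finset.sum_range_succ]
    have hNi1 : N (i+1) = (∑ k ∈ Finset.range m, s i * Q k i) + 1 := by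
      rw [hN]; simp only
      rw [Finset.sum_range_succ']
      have hQ0 : Q 0 (i+1) = 1 := by rw [hQ]; simp
      rw [hQ0]
      congr 1
      exact Finset.sum_congr rfl fun k _ => hshift i k
    have hps : (p:ℝ) * s i = -ε i := by
      rw [hs]; field_simp
    have hBQ : B = s i * Q m i := by
      rw [← hshift i m, hconst (i+1)]
    rw [hNi, hNi1, mul_add, mul_add, Finset.mul_sum, Finset.mul_sum]
    have hcng : ∀ k ∈ Finset.range m, (p:ℝ) * (s i * Q k i) = -(ε i * Q k i) := by
      intro k _
      rw [← mul_assoc, hps]; ring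
    rw [Finset.sum_congr rfl hcng, Finset.sum_neg_distrib]
    have : ε i * Q m i = -((p:ℝ) * B) := by
      rw [hBQ, show ε i = -((p:ℝ) * s i) by linarith [hps]]; ring
    rw [this]
    ring
  have hne : (p:ℝ) * (1 - B) ≠ 0 := ne_of_gt hden
  field_simp
  have h1B : (1:ℝ) - B ≠ 0 := by intro h; rw [h, mul_zero] at hne; exact hne rfl
  rw [hkey, mul_div_assoc, div_self h1B, mul_one]
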